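/- Let h be a hyperexponential term given in standard form h = c0·exp(a/b)·∏_{ℓ=1}^L c_ℓ^{e_ℓ} satisfying the nondegeneracy assumptions. Then there exists a creative telescoping relation for h of order at most γ + 1 − φ3, i.e. there exist polynomials p_0, …, p_r ∈ K[x] with r = γ + 1 − φ3, not all zero, and a rational function q ∈ K(x,y) such that p_0·h + p_1·D_x h + ⋯ + p_r·D_x^r h = D_y(q·h). -/

import Mathlib

open Polynomial Finset
open Module

/-- The derivative with respect to `y` on `K[y][x]`
(we represent bivariate polynomials as `Polynomial (Polynomial K)`,
the *outer* variable being `x`, the *inner* variable being `y`). -/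
noncomputable def DY {K : Type*} [CommRing K] (p : Polynomial (Polynomial K)) :
    Polynomial (Polynomial K) :=
  p.sum fun n a => Polynomial.C (Polynomial.derivative a) * Polynomial.X ^ n

/-- The degree with respect to `y` of an element of `K[y][x]`. -/
noncomputable def degY {K : Type*} [CommRing K] (p : Polynomial (Polynomial K)) : ℕ :=
  p.support.sup fun n => (p.coeff n).natDegree

/-- The embedding of `K[x]` into `K[y][x]` (polynomials free of `y`). -/
noncomputable def liftX {K : Type*} [CommRing K] (p : Polynomial K) :
    Polynomial (Polynomial K) :=
  p.map (Polynomial.C : K →+* Polynomial K)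

section Swap

variable {K : Type*} [CommRing K]

/-- Swap the two variables of `K[y][x]`. -/
noncomputable def swapPoly : Polynomial (Polynomial K) →+* Polynomial (Polynomial K) :=
  Polynomial.eval₂RingHom (Polynomial.mapRingHom (Polynomial.C : K →+* Polynomial K))
    (Polynomial.C Polynomial.X)

lemma swapPoly_coeff (p : Polynomial (Polynomial K)) (j n : ℕ) :
    ((swapPoly p).coeff j).coeff n = (p.coeff n).coeff j := by
  induction p using Polynomial.induction_on' with
  | add p q hp hq => simp [hp, hq]
  | monomial m a =>
      simp only [swapPoly, coe_eval₂RingHom, eval₂_monomial, coe_mapRingHom]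
      rw [← Polynomial.C_pow, Polynomial.coeff_mul_C, Polynomial.coeff_map,
        Polynomial.coeff_monomial]
      rw [Polynomial.coeff_C_mul, Polynomial.coeff_X_pow]
      by_cases h : n = m
      · simp [h]
      · simp [h, Ne.symm h]

lemma swapPoly_swapPoly (p : Polynomial (Polynomial K)) : swapPoly (swapPoly p) = p := by
  ext n j
  rw [swapPoly_coeff, swapPoly_coeff]

lemma swapPoly_injective : Function.Injective (swapPoly (K := K)) := by
  intro p q h
  rw [← swapPoly_swapPoly (p := p), h, swapPoly_swapPoly]

lemma swapPoly_ne_zero {p : Polynomial (Polynomial K)} (hp : p ≠ 0) : swapPoly p ≠ 0 := by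
  intro h
  exact hp (swapPoly_injective (by simpa using h))

lemma natDegree_swapPoly (p : Polynomial (Polynomial K)) :
    (swapPoly p).natDegree = degY p := by
  apply le_antisymm
  · rw [Polynomial.natDegree_le_iff_coeff_eq_zero]
    intro N hN
    ext n
    rw [swapPoly_coeff]
    apply Polynomial.coeff_eq_zero_of_natDegree_lt
    apply lt_of_le_of_lt _ hN
    by_cases h : n ∈ p.support
    · exact Finset.le_sup (f := fun n => (p.coeff n).natDegree) h
    · simp [Polynomial.notMem_support_iff.mp h]
  · apply Finset.sup_le
    intro n _
    rw [Polynomial.natDegree_le_iff_coeff_eq_zero]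
    intro N hN
    have h1 := swapPoly_coeff p N n
    rw [Polynomial.coeff_eq_zero_of_natDegree_lt hN] at h1
    simpa using h1.symm

lemma DY_coeff (p : Polynomial (Polynomial K)) (n : ℕ) :
    (DY p).coeff n = Polynomial.derivative (p.coeff n) := by
  rw [DY, Polynomial.sum, Polynomial.finset_sum_coeff]
  simp only [Polynomial.coeff_C_mul, Polynomial.coeff_X_pow, mul_ite, mul_one, mul_zero]
  rw [Finset.sum_ite_eq p.support n (fun m => Polynomial.derivative (p.coeff m))]
  by_cases h : n ∈ p.support
  · simp [h]
  · simp [h, Polynomial.notMem_support_iff.mp h]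

end Swap


section Swap2
variable {K : Type*} [CommRing K]

lemma swapPoly_DY (p : Polynomial (Polynomial K)) :
    swapPoly (DY p) = Polynomial.derivative (swapPoly p) := by
  ext j n
  rw [swapPoly_coeff, DY_coeff, Polynomial.coeff_derivative, Polynomial.coeff_derivative]
  have hc : ((j : Polynomial K) + 1) = Polynomial.C ((j : K) + 1) := by
    rw [map_add, map_one, Polynomial.C_eq_natCast]
  rw [hc, Polynomial.coeff_mul_C, swapPoly_coeff]

lemma DY_eq_swap (p : Polynomial (Polynomial K)) :
    DY p = swapPoly (Polynomial.derivative (swapPoly p)) := by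
  rw [← swapPoly_DY, swapPoly_swapPoly]

lemma DY_mul (p q : Polynomial (Polynomial K)) : DY (p * q) = DY p * q + p * DY q := by
  rw [DY_eq_swap, map_mul, Polynomial.derivative_mul, map_add, map_mul, map_mul,
    ← DY_eq_swap, ← DY_eq_swap, swapPoly_swapPoly, swapPoly_swapPoly]

lemma DY_zero : DY (0 : Polynomial (Polynomial K)) = 0 := by
  rw [DY_eq_swap, map_zero, Polynomial.derivative_zero, map_zero]

lemma DY_pow (p : Polynomial (Polynomial K)) (n : ℕ) :
    DY (p ^ (n + 1)) = ((n + 1 : ℕ) : Polynomial (Polynomial K)) * p ^ n * DY p := by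
  induction n with
  | zero => simp
  | succ m ih =>
      have : p ^ (m + 1 + 1) = p * p ^ (m + 1) := by ring
      rw [this, DY_mul, ih]
      push_cast
      ring

lemma swapPoly_C_eq_liftX (p : Polynomial K) : swapPoly (Polynomial.C p) = liftX p := by
  ext j n
  rw [swapPoly_coeff]
  simp only [Polynomial.coeff_C, liftX, Polynomial.coeff_map, Polynomial.coeff_C]
  by_cases h : n = 0
  · simp [h]
  · simp [h]

-- degY lemmas
lemma degY_mul_le (p q : Polynomial (Polynomial K)) : degY (p * q) ≤ degY p + degY q := by
  rw [← natDegree_swapPoly, ← natDegree_swapPoly, ← natDegree_swapPoly, map_mul]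
  exact Polynomial.natDegree_mul_le

lemma degY_add_le (p q : Polynomial (Polynomial K)) :
    degY (p + q) ≤ max (degY p) (degY q) := by
  rw [← natDegree_swapPoly, ← natDegree_swapPoly, ← natDegree_swapPoly, map_add]
  exact Polynomial.natDegree_add_le _ _

lemma degY_sub_le (p q : Polynomial (Polynomial K)) :
    degY (p - q) ≤ max (degY p) (degY q) := by
  rw [← natDegree_swapPoly, ← natDegree_swapPoly, ← natDegree_swapPoly, map_sub]
  exact (Polynomial.natDegree_sub_le _ _)

lemma degY_pow_le (p : Polynomial (Polynomial K)) (n : ℕ) : degY (p ^ n) ≤ n * degY p := by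
  rw [← natDegree_swapPoly, ← natDegree_swapPoly, map_pow]
  exact Polynomial.natDegree_pow_le

lemma degY_one : degY (1 : Polynomial (Polynomial K)) = 0 := by
  refine Nat.le_zero.mp (Finset.sup_le fun n hn => ?_)
  rw [Polynomial.coeff_one]
  split <;> simp

lemma degY_prod_le {ι : Type*} (s : Finset ι) (f : ι → Polynomial (Polynomial K)) :
    degY (∏ i ∈ s, f i) ≤ ∑ i ∈ s, degY (f i) := by
  classical
  induction s using Finset.induction_on with
  | empty => simp [degY_one]
  | insert _ _ h ih =>
      rw [Finset.prod_insert h, Finset.sum_insert h]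
      exact (degY_mul_le _ _).trans (by omega)

lemma degY_smul_le (e : K) (p : Polynomial (Polynomial K)) : degY (e • p) ≤ degY p := by
  apply Finset.sup_le
  intro n hn
  have : (e • p).coeff n = e • p.coeff n := by simp [Polynomial.coeff_smul]
  rw [this]
  refine (Polynomial.natDegree_smul_le _ _).trans ?_
  by_cases h : n ∈ p.support
  · exact Finset.le_sup (f := fun n => (p.coeff n).natDegree) h
  · simp [Polynomial.notMem_support_iff.mp h]

lemma degY_sum_le {ι : Type*} (s : Finset ι) (f : ι → Polynomial (Polynomial K)) {D : ℕ}
    (hf : ∀ i ∈ s, degY (f i) ≤ D) : degY (∑ i ∈ s, f i) ≤ D := by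
  classical
  induction s using Finset.induction_on with
  | empty => simp [degY]
  | insert _ _ h ih =>
      rw [Finset.sum_insert h]
      refine (degY_add_le _ _).trans ?_
      simp only [max_le_iff]
      exact ⟨hf _ (Finset.mem_insert_self _ _), ih fun i hi => hf i (Finset.mem_insert_of_mem hi)⟩

lemma degY_C (q : Polynomial K) : degY (Polynomial.C q : Polynomial (Polynomial K)) = q.natDegree := by
  rw [← natDegree_swapPoly, swapPoly_C_eq_liftX, liftX]
  by_cases hq : q = 0
  · simp [hq]
  · rw [Polynomial.natDegree_map_eq_of_injective Polynomial.C_injective]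

lemma degY_natCast (m : ℕ) : degY ((m : ℕ) : Polynomial (Polynomial K)) = 0 := by
  rw [← Polynomial.C_eq_natCast, degY_C, ← Polynomial.C_eq_natCast, Polynomial.natDegree_C]

lemma degY_derivative_le (p : Polynomial (Polynomial K)) :
    degY (Polynomial.derivative p) ≤ degY p := by
  apply Finset.sup_le
  intro n hn
  rw [Polynomial.coeff_derivative]
  refine Polynomial.natDegree_mul_le.trans ?_
  have hc : ((n : Polynomial K) + 1) = Polynomial.C ((n : K) + 1) := by
    rw [map_add, map_one, Polynomial.C_eq_natCast]
  rw [hc, Polynomial.natDegree_C, add_zero]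
  by_cases h : (n + 1) ∈ p.support
  · exact Finset.le_sup (f := fun n => (p.coeff n).natDegree) h
  · simp [Polynomial.notMem_support_iff.mp h]

lemma degY_DY_le (p : Polynomial (Polynomial K)) : degY (DY p) ≤ degY p - 1 := by
  rw [← natDegree_swapPoly, swapPoly_DY, ← natDegree_swapPoly (p := p)]
  exact Polynomial.natDegree_derivative_le _

lemma DY_eq_zero_of_degY_eq_zero {p : Polynomial (Polynomial K)} (h : degY p = 0) :
    DY p = 0 := by
  ext n j
  rw [DY_coeff]
  have hd : (p.coeff n).natDegree = 0 := by
    by_cases hn : n ∈ p.support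
    · exact Nat.le_zero.mp (h ▸ Finset.le_sup (f := fun n => (p.coeff n).natDegree) hn)
    · simp [Polynomial.notMem_support_iff.mp hn]
  obtain ⟨k, hk⟩ := Polynomial.natDegree_eq_zero.mp hd
  rw [← hk, Polynomial.derivative_C]
  simp

end Swap2

section DegYMul
variable {K : Type*} [Field K]
lemma degY_mul {p q : Polynomial (Polynomial K)} (hp : p ≠ 0) (hq : q ≠ 0) :
    degY (p * q) = degY p + degY q := by
  rw [← natDegree_swapPoly, ← natDegree_swapPoly, ← natDegree_swapPoly, map_mul]
  exact Polynomial.natDegree_mul (swapPoly_ne_zero hp) (swapPoly_ne_zero hq)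
end DegYMul
section Wronskian
variable {F : Type*} [Field F] [CharZero F]

lemma lc_derivative {p : Polynomial F} (hp : 0 < p.natDegree) :
    (Polynomial.derivative p).leadingCoeff = p.leadingCoeff * (p.natDegree : F) := by
  have hnd : (Polynomial.derivative p).natDegree = p.natDegree - 1 :=
    Polynomial.natDegree_eq_of_degree_eq_some (Polynomial.degree_derivative_eq p hp)
  rw [Polynomial.leadingCoeff, hnd, Polynomial.coeff_derivative]
  have h1 : p.natDegree - 1 + 1 = p.natDegree := by omega
  rw [h1, Polynomial.leadingCoeff]
  congr 1
  have h2 := congrArg (Nat.cast : ℕ → F) h1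
  push_cast at h2
  exact h2

lemma wronskian_mem_span (z1 : Polynomial F) (hz1 : z1 ≠ 0) :
    ∀ N z2, z2.natDegree ≤ N → z1 * Polynomial.derivative z2 = Polynomial.derivative z1 * z2 →
      z2 ∈ Submodule.span F {z1} := by
  intro N
  induction N with
  | zero =>
      intro z2 hd hrel
      obtain ⟨k, hk⟩ := Polynomial.natDegree_eq_zero.mp (Nat.le_zero.mp hd)
      by_cases hk0 : k = 0
      · rw [← hk, hk0, map_zero]
        exact Submodule.zero_mem _
      · have hdz2 : Polynomial.derivative z2 = 0 := by rw [← hk, Polynomial.derivative_C]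
        rw [hdz2, mul_zero] at hrel
        have hdz1 : Polynomial.derivative z1 = 0 := by
          rcases mul_eq_zero.mp hrel.symm with h | h
          · exact h
          · exact absurd h (by rw [← hk]; simpa using hk0)
        obtain ⟨k1, hk1⟩ := Polynomial.natDegree_eq_zero.mp
          (Polynomial.natDegree_eq_zero_of_derivative_eq_zero hdz1)
        have hk10 : k1 ≠ 0 := by
          intro h0
          exact hz1 (by rw [← hk1, h0, map_zero])
        refine Submodule.mem_span_singleton.mpr ⟨k / k1, ?_⟩
        rw [← hk1, ← hk, Polynomial.smul_C, smul_eq_mul, div_mul_cancel₀ _ hk10]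
  | succ N ih =>
      intro z2 hd hrel
      by_cases hz2 : z2 = 0
      · rw [hz2]; exact Submodule.zero_mem _
      by_cases hdle : z2.natDegree ≤ N
      · exact ih z2 hdle hrel
      have h2pos : 0 < z2.natDegree := by omega
      have hdz2 : Polynomial.derivative z2 ≠ 0 := by
        intro h0
        rw [Polynomial.natDegree_eq_zero_of_derivative_eq_zero h0] at h2pos
        omega
      have hdz1 : Polynomial.derivative z1 ≠ 0 := by
        intro h0
        rw [h0, zero_mul] at hrel
        exact (mul_ne_zero hz1 hdz2) hrel
      have h1pos : 0 < z1.natDegree := by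
        rcases Nat.eq_zero_or_pos z1.natDegree with h | h
        · obtain ⟨k, hk⟩ := Polynomial.natDegree_eq_zero.mp h
          exact absurd (by rw [← hk, Polynomial.derivative_C]) hdz1
        · exact h
      -- degrees are equal
      have hlc1 : z1.leadingCoeff ≠ 0 := Polynomial.leadingCoeff_ne_zero.mpr hz1
      have hlc2 : z2.leadingCoeff ≠ 0 := Polynomial.leadingCoeff_ne_zero.mpr hz2
      have hndeq : z1.natDegree = z2.natDegree := by
        have hlc := congrArg Polynomial.leadingCoeff hrel
        rw [Polynomial.leadingCoeff_mul, Polynomial.leadingCoeff_mul,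
          lc_derivative h2pos, lc_derivative h1pos] at hlc
        have h2 : (z1.leadingCoeff * z2.leadingCoeff) * (z2.natDegree : F)
            = (z1.leadingCoeff * z2.leadingCoeff) * (z1.natDegree : F) := by
          linear_combination hlc
        have h3 := mul_left_cancel₀ (mul_ne_zero hlc1 hlc2) h2
        exact_mod_cast h3.symm
      -- subtract leading terms
      set w1 : Polynomial F := Polynomial.C z1.leadingCoeff * z2 with hw1
      set w2 : Polynomial F := Polynomial.C z2.leadingCoeff * z1 with hw2
      have hw1ne : w1 ≠ 0 := mul_ne_zero (by simpa using hlc1) hz2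
      have hdegeq : w1.degree = w2.degree := by
        rw [hw1, hw2, Polynomial.degree_mul, Polynomial.degree_mul,
          Polynomial.degree_C hlc1, Polynomial.degree_C hlc2, zero_add, zero_add,
          Polynomial.degree_eq_natDegree hz1, Polynomial.degree_eq_natDegree hz2, hndeq]
      have hlceq : w1.leadingCoeff = w2.leadingCoeff := by
        rw [hw1, hw2, Polynomial.leadingCoeff_mul, Polynomial.leadingCoeff_mul,
          Polynomial.leadingCoeff_C, Polynomial.leadingCoeff_C, mul_comm]
      set z2' : Polynomial F := w1 - w2 with hz2'
      have hrel' : z1 * Polynomial.derivative z2' = Polynomial.derivative z1 * z2' := by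
        rw [hz2', hw1, hw2, map_sub, Polynomial.derivative_C_mul, Polynomial.derivative_C_mul]
        ring_nf
        linear_combination (Polynomial.C z1.leadingCoeff) * hrel
      have hdlt : z2'.natDegree ≤ N := by
        by_cases hz2'0 : z2' = 0
        · simp [hz2'0]
        · have : z2'.degree < w1.degree := Polynomial.degree_sub_lt hdegeq hw1ne hlceq
          have h3 : w1.degree = z2.degree := by
            rw [hw1, Polynomial.degree_mul, Polynomial.degree_C hlc1, zero_add]
          rw [h3] at this
          have := Polynomial.natDegree_lt_natDegree hz2'0 this
          omega
      have hmem' := ih z2' hdlt hrel'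
      -- z2 = (1/lc z1) • (z2' + w2)
      have hformula : z2 = z1.leadingCoeff⁻¹ • (z2' + Polynomial.C z2.leadingCoeff * z1) := by
        rw [hz2', hw1, hw2]
        rw [sub_add_cancel]
        rw [Polynomial.smul_eq_C_mul, ← mul_assoc, ← map_mul, inv_mul_cancel₀ hlc1, map_one,
          one_mul]
      rw [hformula]
      refine Submodule.smul_mem _ _ (Submodule.add_mem _ hmem' ?_)
      rw [← Polynomial.smul_eq_C_mul]
      exact Submodule.smul_mem _ _ (Submodule.mem_span_singleton_self z1)

end Wronskian

section Dvd
variable {K : Type*} [Field K]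


lemma dvd_DY_mul_radical (bs : Polynomial (Polynomial K)) :
    ∀ b : Polynomial (Polynomial K),
      (∀ q : Polynomial (Polynomial K), Prime q → q ∣ b → q ∣ bs) → b ∣ DY b * bs := by
  intro b
  induction b using UniqueFactorizationMonoid.induction_on_prime with
  | h₁ => intro _; rw [DY_zero, zero_mul]
  | h₂ x hx => intro _; exact hx.dvd
  | h₃ a p ha hp ih =>
      intro hyp
      rw [DY_mul]
      have hpbs : p ∣ bs := hyp p hp (Dvd.intro a rfl)
      have ha' : a ∣ DY a * bs := ih fun q hq hqa => hyp q hq (hqa.mul_left p)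
      rw [add_mul]
      apply dvd_add
      · rcases hpbs with ⟨t, ht⟩
        exact ⟨DY p * t, by rw [ht]; ring⟩
      · rcases ha' with ⟨t, ht⟩
        exact ⟨t, by rw [mul_assoc, ht]; ring⟩

end Dvd

section Useq
variable {K : Type*} [CommRing K]

noncomputable def useq (c0 W Rx : Polynomial (Polynomial K)) : ℕ → Polynomial (Polynomial K)
  | 0 => c0
  | (i+1) => Polynomial.derivative (useq c0 W Rx i) * W
      - ((i : ℕ) : Polynomial (Polynomial K)) * (useq c0 W Rx i * Polynomial.derivative W)
      + useq c0 W Rx i * Rx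

lemma useq_degY_le (c0 W Rx : Polynomial (Polynomial K)) {δ0 d : ℕ}
    (h0 : degY c0 ≤ δ0) (hW : degY W ≤ d) (hR : degY Rx ≤ d) :
    ∀ i, degY (useq c0 W Rx i) ≤ δ0 + i * d := by
  intro i
  induction i with
  | zero => simpa [useq] using h0
  | succ n ih =>
      rw [useq]
      refine (degY_add_le _ _).trans ?_
      have t1 : degY (Polynomial.derivative (useq c0 W Rx n) * W) ≤ δ0 + (n+1) * d := by
        refine (degY_mul_le _ _).trans ?_
        have := (degY_derivative_le (useq c0 W Rx n)).trans ih
        nlinarith [this, hW]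
      have t2 : degY (((n : ℕ) : Polynomial (Polynomial K)) * (useq c0 W Rx n * Polynomial.derivative W)) ≤ δ0 + (n+1) * d := by
        have h1 := degY_mul_le ((n : ℕ) : Polynomial (Polynomial K)) (useq c0 W Rx n * Polynomial.derivative W)
        have h2 := degY_mul_le (useq c0 W Rx n) (Polynomial.derivative W)
        have h3 := (degY_derivative_le W).trans hW
        rw [degY_natCast] at h1
        nlinarith [ih]
      have t3 : degY (useq c0 W Rx n * Rx) ≤ δ0 + (n+1) * d := by
        refine (degY_mul_le _ _).trans ?_
        nlinarith [ih, hR]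
      have := (degY_sub_le (Polynomial.derivative (useq c0 W Rx n) * W)
        (((n : ℕ) : Polynomial (Polynomial K)) * (useq c0 W Rx n * Polynomial.derivative W)))
      omega

end Useq
section LinearAlgebra
variable {F : Type*} [Field F] [CharZero F]


lemma natDegree_le_of_mem_degreeLT {n : ℕ} {p : Polynomial F} (hp : p ∈ degreeLT F (n+1)) :
    p.natDegree ≤ n := by
  by_cases h0 : p = 0
  · simp [h0]
  · have := (Polynomial.natDegree_lt_iff_degree_lt h0).mpr (Polynomial.mem_degreeLT.mp hp)
    omega

lemma mem_degreeLT_of_natDegree_le {n : ℕ} {p : Polynomial F} (hp : p.natDegree ≤ n) :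
    p ∈ degreeLT F (n+1) := by
  rw [Polynomial.mem_degreeLT]
  calc p.degree ≤ (p.natDegree : WithBot ℕ) := Polynomial.degree_le_natDegree
  _ < ((n+1 : ℕ) : WithBot ℕ) := by exact_mod_cast Nat.lt_succ_of_le hp

set_option maxHeartbeats 1000000 in
lemma solve_system (r ν Λ : ℕ)
    (A : Fin (r+1) → Polynomial F) (B C : Polynomial F)
    (hA : ∀ i, (A i).natDegree ≤ Λ) (hB : B ≠ 0)
    (hBd : B.natDegree + ν ≤ Λ + 1) (hCd : C.natDegree + ν ≤ Λ)
    (hdim : Λ + 3 ≤ (r+1) + (ν+1)) :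
    ∃ (P : Fin (r+1) → F) (Z : Polynomial F), (∃ i, P i ≠ 0) ∧ Z.natDegree ≤ ν ∧
      ∑ i, Polynomial.C (P i) * A i = Polynomial.derivative Z * B + Z * C := by
  classical
  -- the two component maps
  set l1 : (Fin (r+1) → F) →ₗ[F] Polynomial F :=
    { toFun := fun P => ∑ i, Polynomial.C (P i) * A i
      map_add' := by
        intro P Q
        simp only [Pi.add_apply, map_add, add_mul]
        rw [Finset.sum_add_distrib]
      map_smul' := by
        intro m P
        simp only [Pi.smul_apply, smul_eq_mul, map_mul, RingHom.id_apply]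
        rw [Finset.smul_sum]
        congr 1
        ext i
        rw [Polynomial.smul_eq_C_mul]
        ring } with hl1
  set l2 : (↥(degreeLT F (ν+1))) →ₗ[F] Polynomial F :=
    ((LinearMap.mulRight F B).comp
      ((Polynomial.derivative : Polynomial F →ₗ[F] Polynomial F).comp
        (Submodule.subtype _)))
    + ((LinearMap.mulRight F C).comp (Submodule.subtype _)) with hl2
  have hl2app : ∀ Z : (↥(degreeLT F (ν+1))), l2 Z = Polynomial.derivative (Z : Polynomial F) * B
      + (Z : Polynomial F) * C := fun _ => rfl
  have hl1app : ∀ P : Fin (r+1) → F, l1 P = ∑ i, Polynomial.C (P i) * A i := fun _ => rfl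
  have hl2deg : ∀ Z : (↥(degreeLT F (ν+1))), (l2 Z).natDegree ≤ Λ := by
    intro Z
    have hZd : (Z : Polynomial F).natDegree ≤ ν :=
      natDegree_le_of_mem_degreeLT Z.2
    rw [hl2app]
    refine Polynomial.natDegree_add_le_of_degree_le ?_ ?_
    · by_cases hd : Polynomial.derivative (Z : Polynomial F) = 0
      · simp [hd]
      · have h1 : (Z : Polynomial F).natDegree ≠ 0 := by
          intro h0
          exact hd (Polynomial.derivative_of_natDegree_zero h0)
        have h2 : (Polynomial.derivative (Z : Polynomial F)).natDegree ≤ ν - 1 :=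
          (Polynomial.natDegree_derivative_le _).trans (by omega)
        refine Polynomial.natDegree_mul_le.trans ?_
        omega
    · refine Polynomial.natDegree_mul_le.trans (by omega)
  set Φraw : ((Fin (r+1) → F) × (↥(degreeLT F (ν+1)))) →ₗ[F] Polynomial F :=
    l1.comp (LinearMap.fst F _ _) - l2.comp (LinearMap.snd F _ _) with hΦraw
  have hΦrawapp : ∀ x : (Fin (r+1) → F) × (↥(degreeLT F (ν+1))), Φraw x = l1 x.1 - l2 x.2 := fun _ => rfl
  have hmem : ∀ x, Φraw x ∈ degreeLT F (Λ+1) := by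
    intro x
    apply mem_degreeLT_of_natDegree_le
    have h1 : (l1 x.1).natDegree ≤ Λ := by
      rw [hl1app]
      refine Polynomial.natDegree_sum_le_of_forall_le _ _ fun i _ => ?_
      refine Polynomial.natDegree_mul_le.trans ?_
      simpa using hA i
    have h2 := hl2deg x.2
    rw [hΦrawapp]
    exact (Polynomial.natDegree_sub_le _ _).trans (by omega)
  set Φ : ((Fin (r+1) → F) × (↥(degreeLT F (ν+1)))) →ₗ[F] ↥(degreeLT F (Λ+1)) :=
    Φraw.codRestrict _ hmem with hΦ
  -- dimension count
  haveI : Module.Finite F ↥(degreeLT F (ν+1)) :=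
    Module.Finite.equiv (Polynomial.degreeLTEquiv F (ν+1)).symm
  haveI : Module.Finite F ↥(degreeLT F (Λ+1)) :=
    Module.Finite.equiv (Polynomial.degreeLTEquiv F (Λ+1)).symm
  have hfr2 : finrank F (↥(degreeLT F (ν+1))) = ν + 1 := by
    rw [LinearEquiv.finrank_eq (Polynomial.degreeLTEquiv F (ν+1))]
    simp [Module.finrank_fin_fun]
  have hd1 := Module.finrank_prod (R := F) (M := (Fin (r+1) → F)) (M' := ↥(degreeLT F (ν+1)))
  have hd2 : finrank F (Fin (r+1) → F) = r+1 := by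
    rw [Module.finrank_fin_fun]
  have hfrcod : finrank F ↥(degreeLT F (Λ+1)) = Λ + 1 := by
    rw [LinearEquiv.finrank_eq (Polynomial.degreeLTEquiv F (Λ+1))]
    simp [Module.finrank_fin_fun]
  have hker2 : 2 ≤ finrank F ↥(LinearMap.ker Φ) := by
    have h1 := LinearMap.finrank_range_add_finrank_ker Φ
    have h2 : finrank F ↥(LinearMap.range Φ) ≤ Λ + 1 := by
      have h3 := Submodule.finrank_le (LinearMap.range Φ)
      omega
    rw [hd1, hd2, hfr2] at h1
    omega
  -- kernel of l2 has dimension at most 1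
  have hkerl2 : finrank F ↥(LinearMap.ker l2) ≤ 1 := by
    rcases eq_or_ne (LinearMap.ker l2) ⊥ with hbot | hne
    · rw [hbot, finrank_bot]; omega
    · obtain ⟨z₀, hz₀mem, hz₀ne⟩ := (Submodule.ne_bot_iff _).mp hne
      have hz₀v : (z₀ : Polynomial F) ≠ 0 := by
        intro h0
        exact hz₀ne (Subtype.ext h0)
      have hle : LinearMap.ker l2 ≤ Submodule.span F {z₀} := by
        intro Z hZ
        have hZ0 : Polynomial.derivative (Z : Polynomial F) * B + (Z : Polynomial F) * C = 0 := by
          rw [← hl2app]; exact hZ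
        have hz00 : Polynomial.derivative (z₀ : Polynomial F) * B + (z₀ : Polynomial F) * C = 0 := by
          rw [← hl2app]; exact hz₀mem
        have hw : (z₀ : Polynomial F) * Polynomial.derivative (Z : Polynomial F)
            = Polynomial.derivative (z₀ : Polynomial F) * (Z : Polynomial F) := by
          have hmul : ((z₀ : Polynomial F) * Polynomial.derivative (Z : Polynomial F)
              - Polynomial.derivative (z₀ : Polynomial F) * (Z : Polynomial F)) * B = 0 := by
            linear_combination (z₀ : Polynomial F) * hZ0 - (Z : Polynomial F) * hz00
          rcases mul_eq_zero.mp hmul with h | h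
          · linear_combination h
          · exact absurd h hB
        have hspan := wronskian_mem_span (z₀ : Polynomial F) hz₀v
          ((Z : Polynomial F).natDegree) (Z : Polynomial F) le_rfl hw
        obtain ⟨α, hα⟩ := Submodule.mem_span_singleton.mp hspan
        have : Z = α • z₀ := by
          apply Subtype.ext
          rw [← hα]
          rfl
        rw [this]
        exact Submodule.smul_mem _ _ (Submodule.mem_span_singleton_self _)
      calc finrank F ↥(LinearMap.ker l2) ≤ finrank F ↥(Submodule.span F {z₀}) :=
            Submodule.finrank_mono hle
      _ = 1 := finrank_span_singleton hz₀ne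
  -- extract a kernel element with nonzero first component
  have hex : ∃ k : ↥(LinearMap.ker Φ), (k : (Fin (r+1) → F) × (↥(degreeLT F (ν+1)))).1 ≠ 0 := by
    by_contra hall
    push_neg at hall
    have hj : ∀ k : ↥(LinearMap.ker Φ), (k : (Fin (r+1) → F) × (↥(degreeLT F (ν+1)))).2 ∈ LinearMap.ker l2 := by
      intro k
      have hk := k.2
      rw [LinearMap.mem_ker] at hk
      have hraw : Φraw (k : (Fin (r+1) → F) × (↥(degreeLT F (ν+1)))) = 0 :=
        congrArg Subtype.val hk
      rw [LinearMap.mem_ker]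
      have h1 : l1 (k : (Fin (r+1) → F) × (↥(degreeLT F (ν+1)))).1 = 0 := by rw [hall k, hl1app]; simp
      rw [hΦrawapp, h1] at hraw
      linear_combination -hraw
    set j : ↥(LinearMap.ker Φ) →ₗ[F] ↥(LinearMap.ker l2) :=
      LinearMap.codRestrict _ ((LinearMap.snd F _ _).comp (LinearMap.ker Φ).subtype)
        hj with hjdef
    have hjinj : Function.Injective j := by
      intro k k' hkk
      have h2 : (k : (Fin (r+1) → F) × (↥(degreeLT F (ν+1)))).2 = (k' : (Fin (r+1) → F) × (↥(degreeLT F (ν+1)))).2 := by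
        have := congrArg Subtype.val hkk
        exact this
      apply Subtype.ext
      apply Prod.ext
      · rw [hall k, hall k']
      · exact h2
    have := LinearMap.finrank_le_finrank_of_injective hjinj
    omega
  obtain ⟨k, hk1⟩ := hex
  refine ⟨(k : (Fin (r+1) → F) × (↥(degreeLT F (ν+1)))).1, ((k : (Fin (r+1) → F) × (↥(degreeLT F (ν+1)))).2 : Polynomial F),
    ?_, natDegree_le_of_mem_degreeLT (k : (Fin (r+1) → F) × (↥(degreeLT F (ν+1)))).2.2, ?_⟩
  · by_contra hnone
    push_neg at hnone
    exact hk1 (funext hnone)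
  · have hk := k.2
    rw [LinearMap.mem_ker] at hk
    have hraw : Φraw (k : (Fin (r+1) → F) × (↥(degreeLT F (ν+1)))) = 0 :=
      congrArg Subtype.val hk
    rw [hΦrawapp, hl2app, hl1app] at hraw
    linear_combination hraw

end LinearAlgebra
section Main

open Module

/-- The falling factorial `z(z-1)⋯(z-n+1)` of an element of `K`. -/
noncomputable def ffall {K : Type*} [Field K] (z : K) (n : ℕ) : K :=
  ∏ j ∈ Finset.range n, (z - (j : K))

set_option maxHeartbeats 2000000 in
theorem minimal_order_bound
    {K : Type*} {E : Type*} [Field K] [CharZero K] [Field E]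
    (Dx Dy : E → E)
    (hDxadd : ∀ u v : E, Dx (u + v) = Dx u + Dx v)
    (hDxmul : ∀ u v : E, Dx (u * v) = Dx u * v + u * Dx v)
    (hDyadd : ∀ u v : E, Dy (u + v) = Dy u + Dy v)
    (hDymul : ∀ u v : E, Dy (u * v) = Dy u * v + u * Dy v)
    (hcomm : ∀ u : E, Dx (Dy u) = Dy (Dx u))
    (ι : Polynomial (Polynomial K) →+* E)
    (hinj : Function.Injective ι)
    (hDxι : ∀ q : Polynomial (Polynomial K), Dx (ι q) = ι (Polynomial.derivative q))
    (hDyι : ∀ q : Polynomial (Polynomial K), Dy (ι q) = ι (DY q))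
    (L : ℕ) (a b c0 bs : Polynomial (Polynomial K))
    (c : Fin L → Polynomial (Polynomial K)) (e : Fin L → K)
    (ha : a ≠ 0) (hb : b ≠ 0) (hc0 : c0 ≠ 0) (hc : ∀ ℓ, c ℓ ≠ 0)
    (hbs : Squarefree bs)
    (hbsb : ∀ q : Polynomial (Polynomial K), Prime q → (q ∣ bs ↔ q ∣ b))
    (h : E) (hh : h ≠ 0)
    (hDxh : Dx h * ι (c0 * b ^ 2 * (∏ ℓ, c ℓ))
      = h * ι (Polynomial.derivative c0 * b ^ 2 * (∏ ℓ, c ℓ)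
          + (Polynomial.derivative a * b - a * Polynomial.derivative b) * c0 * (∏ ℓ, c ℓ)
          + c0 * b ^ 2 * ∑ ℓ, e ℓ • (Polynomial.derivative (c ℓ) * ∏ j ∈ Finset.univ.erase ℓ, c j)))
    (hDyh : Dy h * ι (c0 * b ^ 2 * (∏ ℓ, c ℓ))
      = h * ι (DY c0 * b ^ 2 * (∏ ℓ, c ℓ)
          + (DY a * b - a * DY b) * c0 * (∏ ℓ, c ℓ)
          + c0 * b ^ 2 * ∑ ℓ, e ℓ • (DY (c ℓ) * ∏ j ∈ Finset.univ.erase ℓ, c j)))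
    (hce : ∀ ℓ, e ℓ ≠ 0)
    (hndx : 0 < max a.natDegree b.natDegree + ∑ ℓ, (c ℓ).natDegree)
    (hndy : 0 < max (degY a) (degY b) + ∑ ℓ, degY (c ℓ))
    (φ3 : ℕ) (hφ3a : φ3 ≤ 1)
    (hφ3 : φ3 = 1 ↔
      ((∃ a' b' : Polynomial K, b' ≠ 0 ∧ a * liftX b' = b * liftX a') ∧
       (∀ ℓ, degY (c ℓ) = 0 ∨ ∃ n : ℤ, e ℓ = (n : K)) ∧
       (∃ η : ℤ, (η : K) = ∑ ℓ, e ℓ * (degY (c ℓ) : K) ∧ η ≤ (degY c0 : ℤ))))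
 :
    ∃ p : ℕ → Polynomial K,
      (∃ i ≤ (degY bs + max (degY a) (degY b) + ∑ ℓ, degY (c ℓ)) + 1 - φ3, p i ≠ 0) ∧
      ∃ u v : Polynomial (Polynomial K), v ≠ 0 ∧
        ∑ i ∈ Finset.range ((degY bs + max (degY a) (degY b) + ∑ ℓ, degY (c ℓ)) + 1 - φ3 + 1), ι (liftX (p i)) * Dx^[i] h
          = Dy (ι u * h / ι v) := by
  classical
  -- ι is nonzero on nonzero polynomials
  have hιne : ∀ {q : Polynomial (Polynomial K)}, q ≠ 0 → ι q ≠ 0 := by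
    intro q hq h0
    exact hq (hinj (by rw [h0, map_zero]))
  set ct := ∏ ℓ, c ℓ with hctdef
  have hct0 : ct ≠ 0 := Finset.prod_ne_zero_iff.mpr fun ℓ _ => hc ℓ
  have hbs0 : bs ≠ 0 := hbs.ne_zero
  set Sx := ∑ ℓ, e ℓ • (Polynomial.derivative (c ℓ) * ∏ j ∈ Finset.univ.erase ℓ, c j) with hSxdef
  set Sy := ∑ ℓ, e ℓ • (DY (c ℓ) * ∏ j ∈ Finset.univ.erase ℓ, c j) with hSydef
  set γ := degY bs + max (degY a) (degY b) + ∑ ℓ, degY (c ℓ) with hγdef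
  have hγ1 : 1 ≤ γ := by omega
  set s := γ - φ3 with hsdef
  have hrs : γ + 1 - φ3 = s + 1 := by omega
  rw [hrs]
  -- degree abbreviations
  set δ0 := degY c0 with hδ0def
  set m := max (degY a) (degY b) with hmdef
  set t' := ∑ ℓ, degY (c ℓ) with ht'def
  set d' := degY b + t' + m with hd'def
  set Λ := δ0 + (s+1)*d' + 2*(degY bs) + t' with hΛdef
  have hd'm : m ≤ d' := by omega
  have hΛγ : γ ≤ Λ := by
    have h1 : d' ≤ (s+1)*d' := Nat.le_mul_of_pos_left _ (by omega)
    omega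
  set ν := Λ - γ + 1 with hνdef
  -- the structural polynomials
  set W := b^2 * ct with hWdef
  set Rx := (Polynomial.derivative a * b - a * Polynomial.derivative b) * ct + b ^ 2 * Sx
    with hRxdef
  set u := useq c0 W Rx with hudef
  -- the divisibility cofactor
  obtain ⟨h₁, hh₁'⟩ : b ∣ DY b * bs :=
    dvd_DY_mul_radical bs b (fun q hq hqb => (hbsb q hq).mpr hqb)
  have hh₁ : h₁ * b = DY b * bs := by rw [hh₁']; ring
  set G := DY a * bs * ct - a * h₁ * ct
      - ((2*s+1 : ℕ) : Polynomial (Polynomial K)) * (DY b * bs * ct)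
      - DY bs * b * ct
      - ((s+1 : ℕ) : Polynomial (Polynomial K)) * (b * bs * DY ct)
      + b * bs * Sy with hGdef
  -- degree bounds
  have hctd : degY ct ≤ t' := by rw [hctdef, ht'def]; exact degY_prod_le _ _
  have hbm : degY b ≤ m := le_max_right _ _
  have ham : degY a ≤ m := le_max_left _ _
  have hWd : degY W ≤ d' := by
    rw [hWdef]
    have h1 := degY_mul_le (b^2) ct
    have h2 := degY_pow_le b 2
    omega
  have hSxd : degY Sx ≤ t' := by
    rw [hSxdef]
    refine degY_sum_le _ _ fun ℓ _ => ?_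
    refine (degY_smul_le _ _).trans ?_
    have h1 := degY_mul_le (Polynomial.derivative (c ℓ)) (∏ j ∈ Finset.univ.erase ℓ, c j)
    have h2 := degY_derivative_le (c ℓ)
    have h3 := degY_prod_le (Finset.univ.erase ℓ) c
    have h4 : degY (c ℓ) + ∑ j ∈ Finset.univ.erase ℓ, degY (c j) = t' := by
      rw [ht'def]
      exact Finset.add_sum_erase Finset.univ (fun j => degY (c j)) (Finset.mem_univ ℓ)
    omega
  have hRxd : degY Rx ≤ d' := by
    rw [hRxdef]
    refine (degY_add_le _ _).trans (max_le ?_ ?_)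
    · have h1 := degY_mul_le (Polynomial.derivative a * b - a * Polynomial.derivative b) ct
      have h2 := degY_sub_le (Polynomial.derivative a * b) (a * Polynomial.derivative b)
      have h3 := degY_mul_le (Polynomial.derivative a) b
      have h4 := degY_mul_le a (Polynomial.derivative b)
      have h5 := degY_derivative_le a
      have h6 := degY_derivative_le b
      omega
    · have h1 := degY_mul_le (b^2) Sx
      have h2 := degY_pow_le b 2
      omega
  have hud : ∀ i : ℕ, degY (u i) ≤ δ0 + i * d' := by
    rw [hudef]
    exact useq_degY_le c0 W Rx le_rfl hWd hRxd
  have hdegY0 : degY (0 : Polynomial (Polynomial K)) = 0 := by simp [degY]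
  have hDYsplit : ∀ p : Polynomial (Polynomial K),
      DY p = 0 ∨ (1 ≤ degY p ∧ degY (DY p) ≤ degY p - 1) := by
    intro p
    by_cases h0 : degY p = 0
    · exact Or.inl (DY_eq_zero_of_degY_eq_zero h0)
    · exact Or.inr ⟨by omega, degY_DY_le p⟩
  have hT1 : degY (DY a * bs * ct) ≤ γ - 1 := by
    rcases hDYsplit a with h0 | ⟨h1, h2⟩
    · rw [h0, zero_mul, zero_mul, hdegY0]; omega
    · have h3 := degY_mul_le (DY a * bs) ct
      have h4 := degY_mul_le (DY a) bs
      omega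
  have hT2 : degY (a * h₁ * ct) ≤ γ - 1 := by
    by_cases hDYb : DY b = 0
    · have hz : h₁ = 0 := by
        have h0 : h₁ * b = 0 := by rw [hh₁, hDYb, zero_mul]
        rcases mul_eq_zero.mp h0 with hx | hx
        · exact hx
        · exact absurd hx hb
      rw [hz, mul_zero, zero_mul, hdegY0]; omega
    · have hbne : 1 ≤ degY b := by
        by_contra hd
        exact hDYb (DY_eq_zero_of_degY_eq_zero (by omega))
      have hh₁ne : h₁ ≠ 0 := by
        intro h0
        rw [h0, zero_mul] at hh₁
        rcases mul_eq_zero.mp hh₁.symm with hx | hx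
        · exact hDYb hx
        · exact hbs0 hx
      have heq : degY h₁ + degY b = degY (DY b) + degY bs := by
        rw [← degY_mul hh₁ne hb, ← degY_mul hDYb hbs0, hh₁]
      have hDYbd : degY (DY b) ≤ degY b - 1 := degY_DY_le b
      have hd1 := degY_mul_le (a * h₁) ct
      have hd2 := degY_mul_le a h₁
      omega
  have hT3 : degY (((2*s+1 : ℕ) : Polynomial (Polynomial K)) * (DY b * bs * ct)) ≤ γ - 1 := by
    rcases hDYsplit b with h0 | ⟨h1, h2⟩
    · rw [h0, zero_mul, zero_mul, mul_zero, hdegY0]; omega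
    · have h3 := degY_mul_le (((2*s+1 : ℕ) : Polynomial (Polynomial K))) (DY b * bs * ct)
      have h4 := degY_mul_le (DY b * bs) ct
      have h5 := degY_mul_le (DY b) bs
      have h6 := degY_natCast (K := K) (2*s+1)
      omega
  have hT4 : degY (DY bs * b * ct) ≤ γ - 1 := by
    rcases hDYsplit bs with h0 | ⟨h1, h2⟩
    · rw [h0, zero_mul, zero_mul, hdegY0]; omega
    · have h3 := degY_mul_le (DY bs * b) ct
      have h4 := degY_mul_le (DY bs) b
      omega
  have hT5 : degY (((s+1 : ℕ) : Polynomial (Polynomial K)) * (b * bs * DY ct)) ≤ γ - 1 := by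
    rcases hDYsplit ct with h0 | ⟨h1, h2⟩
    · rw [h0, mul_zero, mul_zero, hdegY0]; omega
    · have h3 := degY_mul_le (((s+1 : ℕ) : Polynomial (Polynomial K))) (b * bs * DY ct)
      have h4 := degY_mul_le (b * bs) (DY ct)
      have h5 := degY_mul_le b bs
      have h6 := degY_natCast (K := K) (s+1)
      omega
  have hSyd : degY Sy ≤ t' - 1 := by
    rw [hSydef]
    refine degY_sum_le _ _ fun ℓ _ => ?_
    refine (degY_smul_le _ _).trans ?_
    by_cases h0 : DY (c ℓ) = 0
    · rw [h0, zero_mul, hdegY0]; omega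
    · have h1 : 1 ≤ degY (c ℓ) := by
        by_contra hd
        exact h0 (DY_eq_zero_of_degY_eq_zero (by omega))
      have h2 := degY_DY_le (c ℓ)
      have h3 := degY_mul_le (DY (c ℓ)) (∏ j ∈ Finset.univ.erase ℓ, c j)
      have h4 := degY_prod_le (Finset.univ.erase ℓ) c
      have h5 : degY (c ℓ) + ∑ j ∈ Finset.univ.erase ℓ, degY (c j) = t' := by
        rw [ht'def]
        exact Finset.add_sum_erase Finset.univ (fun j => degY (c j)) (Finset.mem_univ ℓ)
      omega
  have hT6 : degY (b * bs * Sy) ≤ γ - 1 := by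
    by_cases ht0 : t' = 0
    · have hSy0 : Sy = 0 := by
        rw [hSydef]
        refine Finset.sum_eq_zero fun ℓ _ => ?_
        have hcl : degY (c ℓ) = 0 := by
          have h7 : ∀ j ∈ Finset.univ, degY (c j) = 0 :=
            Finset.sum_eq_zero_iff.mp (by rw [← ht'def]; omega)
          exact h7 ℓ (Finset.mem_univ ℓ)
        rw [DY_eq_zero_of_degY_eq_zero hcl, zero_mul, smul_zero]
      rw [hSy0, mul_zero, hdegY0]; omega
    · have h1 := degY_mul_le (b * bs) Sy
      have h2 := degY_mul_le b bs
      omega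
  have hGd : degY G ≤ γ - 1 := by
    rw [hGdef]
    refine (degY_add_le _ _).trans (max_le ?_ hT6)
    refine (degY_sub_le _ _).trans (max_le ?_ hT5)
    refine (degY_sub_le _ _).trans (max_le ?_ hT4)
    refine (degY_sub_le _ _).trans (max_le ?_ hT3)
    exact (degY_sub_le _ _).trans (max_le hT1 hT2)
  have hBpd : degY (b * bs * ct) ≤ γ := by
    have h1 := degY_mul_le (b * bs) ct
    have h2 := degY_mul_le b bs
    omega
  -- Lemma A
  have hpow : ∀ i : ℕ, Polynomial.derivative (W^i * c0) * (W * c0)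
      = (W^i * c0) * (((i:ℕ) : Polynomial (Polynomial K)) * Polynomial.derivative W * c0
          + W * Polynomial.derivative c0) := by
    intro i
    rcases i with _ | j
    · simp only [pow_zero, one_mul, Nat.cast_zero, zero_mul]
      ring
    · rw [Polynomial.derivative_mul, Polynomial.derivative_pow]
      simp only [Nat.add_sub_cancel, Polynomial.C_eq_natCast]
      push_cast
      ring
  have lemA : ∀ i : ℕ, Dx^[i] h * ι (W^i * c0) = h * ι (u i) := by
    intro i
    induction i with
    | zero =>
        simp only [Function.iterate_zero_apply, pow_zero, one_mul]
        rw [hudef]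
        rfl
    | succ i IH =>
        have H := congrArg Dx IH
        rw [hDxmul, hDxmul, hDxι, hDxι] at H
        rw [show Dx (Dx^[i] h) = Dx^[i+1] h from (Function.iterate_succ_apply' Dx i h).symm] at H
        have K1 : ι (W^i * c0) * ι (W * c0) = ι (W^(i+1) * c0) * ι c0 := by
          rw [← map_mul, ← map_mul]
          exact congrArg ι (by ring)
        have K2 : ι (Polynomial.derivative (W^i * c0)) * ι (W * c0)
            = ι (W^i * c0) * ι (((i:ℕ) : Polynomial (Polynomial K)) * Polynomial.derivative W * c0
                + W * Polynomial.derivative c0) := by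
          rw [← map_mul, ← map_mul]
          exact congrArg ι (hpow i)
        have K3 : ι (W * c0) = ι (c0 * b^2 * ct) := congrArg ι (by rw [hWdef]; ring)
        have K4 : ι (Polynomial.derivative c0 * b ^ 2 * ct
              + (Polynomial.derivative a * b - a * Polynomial.derivative b) * c0 * ct
              + c0 * b ^ 2 * Sx) * ι (u i)
              + ι (Polynomial.derivative (u i)) * ι (W * c0)
              - ι (u i) * ι (((i:ℕ) : Polynomial (Polynomial K)) * Polynomial.derivative W * c0
                  + W * Polynomial.derivative c0)
            = ι (u (i+1)) * ι c0 := by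
          rw [← map_mul, ← map_mul, ← map_mul, ← map_mul]
          rw [← map_add, ← map_sub]
          refine congrArg ι ?_
          rw [hudef]
          show _ = useq c0 W Rx (i+1) * c0
          rw [useq, hRxdef, hWdef]
          ring
        have hcancel : (Dx^[i+1] h * ι (W^(i+1) * c0)) * ι c0 = (h * ι (u (i+1))) * ι c0 := by
          linear_combination (-(Dx^[i+1] h)) * K1 + (ι (W * c0)) * H - (Dx^[i] h) * K2
            - (ι (((i:ℕ) : Polynomial (Polynomial K)) * Polynomial.derivative W * c0
                + W * Polynomial.derivative c0)) * IH
            + (Dx h * ι (u i)) * K3 + (ι (u i)) * hDxh + h * K4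
        exact mul_right_cancel₀ (hιne hc0) hcancel
  -- Lemma B
  have hv0 : b^(2*s+1) * bs * ct^(s+1) * c0 ≠ 0 :=
    mul_ne_zero (mul_ne_zero (mul_ne_zero (pow_ne_zero _ hb) hbs0) (pow_ne_zero _ hct0)) hc0
  have hDy1 : Dy (1:E) = 0 := by
    have h1 := hDymul 1 1
    rw [one_mul] at h1
    linear_combination -h1
  have hDYv : DY (b^(2*s+1) * bs * ct^(s+1) * c0)
      = ((2*s+1 : ℕ) : Polynomial (Polynomial K)) * b^(2*s) * DY b * (bs * ct^(s+1) * c0)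
      + b^(2*s+1) * (DY bs * ct^(s+1) * c0)
      + b^(2*s+1) * bs * (((s+1 : ℕ) : Polynomial (Polynomial K)) * ct^s * DY ct * c0)
      + b^(2*s+1) * bs * ct^(s+1) * DY c0 := by
    rw [DY_mul, DY_mul, DY_mul, DY_pow, DY_pow]
    push_cast
    ring
  have dagger : ∀ z : Polynomial (Polynomial K),
      DY z * (b*bs*ct) * ((c0*b^2*ct) * (b^(2*s+1) * bs * ct^(s+1) * c0))
        + z * (DY c0 * b ^ 2 * ct + (DY a * b - a * DY b) * c0 * ct + c0 * b ^ 2 * Sy)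
            * (b*bs*ct) * (b^(2*s+1) * bs * ct^(s+1) * c0)
        - z * DY (b^(2*s+1) * bs * ct^(s+1) * c0) * (b*bs*ct) * (c0*b^2*ct)
      = (DY z * (b*bs*ct) + z * G) * ((c0*b^2*ct) * (b^(2*s+1) * bs * ct^(s+1) * c0)) := by
    intro z
    rw [hGdef]
    linear_combination (z * a * c0^2 * b^(2*s+2) * bs * ct^(s+3)) * hh₁
      - (z * ((b*bs*ct) * (c0*b^2*ct))) * hDYv
  have lemB : ∀ z : Polynomial (Polynomial K),
      Dy (ι z * h / ι (b^(2*s+1) * bs * ct^(s+1) * c0))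
        * ι ((b^(2*s+1) * bs * ct^(s+1) * c0) * (b * bs * ct))
      = h * ι (DY z * (b * bs * ct) + z * G) := by
    intro z
    have hv0E : ι (b^(2*s+1) * bs * ct^(s+1) * c0) ≠ 0 := hιne hv0
    have hQ0E : ι (c0 * b^2 * ct) ≠ 0 :=
      hιne (mul_ne_zero (mul_ne_zero hc0 (pow_ne_zero _ hb)) hct0)
    have hVinv : ι (b^(2*s+1) * bs * ct^(s+1) * c0)
        * (ι (b^(2*s+1) * bs * ct^(s+1) * c0))⁻¹ = 1 := mul_inv_cancel₀ hv0E
    have hDyinv : Dy ((ι (b^(2*s+1) * bs * ct^(s+1) * c0))⁻¹)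
        = -(ι (DY (b^(2*s+1) * bs * ct^(s+1) * c0))
            * ((ι (b^(2*s+1) * bs * ct^(s+1) * c0))⁻¹
              * (ι (b^(2*s+1) * bs * ct^(s+1) * c0))⁻¹)) := by
      have h2 := congrArg Dy hVinv
      rw [hDymul, hDyι, hDy1] at h2
      have h3 : ι (b^(2*s+1) * bs * ct^(s+1) * c0)
            * (Dy ((ι (b^(2*s+1) * bs * ct^(s+1) * c0))⁻¹))
          = ι (b^(2*s+1) * bs * ct^(s+1) * c0)
            * (-(ι (DY (b^(2*s+1) * bs * ct^(s+1) * c0))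
              * ((ι (b^(2*s+1) * bs * ct^(s+1) * c0))⁻¹
                * (ι (b^(2*s+1) * bs * ct^(s+1) * c0))⁻¹))) := by
        linear_combination h2
          + (ι (DY (b^(2*s+1) * bs * ct^(s+1) * c0))
              * (ι (b^(2*s+1) * bs * ct^(s+1) * c0))⁻¹) * hVinv
      exact mul_left_cancel₀ hv0E h3
    have daggerE := congrArg ι (dagger z)
    rw [div_eq_mul_inv, hDymul, hDymul, hDyι, hDyinv]
    apply mul_right_cancel₀ (mul_ne_zero hQ0E hv0E)
    simp only [map_mul, map_add, map_sub, map_pow, map_natCast] at daggerE hDyh hVinv ⊢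
    linear_combination
      ((ι (DY z) * h + ι z * Dy h) * ((ι b * ι bs * ι ct) * (ι c0 * ι b ^ 2 * ι ct)
          * (ι b ^ (2*s+1) * ι bs * ι ct ^ (s+1) * ι c0))
        - ((ι b ^ (2*s+1) * ι bs * ι ct ^ (s+1) * ι c0)⁻¹
              * (ι b ^ (2*s+1) * ι bs * ι ct ^ (s+1) * ι c0) + 1)
          * (ι z * h * ι (DY (b^(2*s+1) * bs * ct^(s+1) * c0))
            * (ι b * ι bs * ι ct) * (ι c0 * ι b ^ 2 * ι ct))) * hVinv
      + (ι z * (ι b * ι bs * ι ct)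
          * (ι b ^ (2*s+1) * ι bs * ι ct ^ (s+1) * ι c0)) * hDyh
      + h * daggerE
  -- the linear system
  obtain ⟨pK, z₂, hpK, hstar⟩ :
      ∃ (pK : Fin (s+1+1) → Polynomial K) (z₂ : Polynomial (Polynomial K)),
        (∃ i, pK i ≠ 0) ∧
        (∑ i : Fin (s+1+1), liftX (pK i) * (u i * W^(s+1-(i:ℕ)) * bs^2 * ct))
          = DY z₂ * (b * bs * ct) + z₂ * G := by
    haveI : CharZero (FractionRing (Polynomial K)) :=
      charZero_of_injective_algebraMap
        (IsFractionRing.injective (Polynomial K) (FractionRing (Polynomial K)))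
    set φm : Polynomial K →+* FractionRing (Polynomial K) :=
      algebraMap (Polynomial K) (FractionRing (Polynomial K)) with hφmdef
    have hφinj : Function.Injective φm := IsFractionRing.injective _ _
    have hψdeg : ∀ q : Polynomial (Polynomial K),
        ((swapPoly q).map φm).natDegree ≤ degY q := by
      intro q
      calc ((swapPoly q).map φm).natDegree ≤ (swapPoly q).natDegree :=
            Polynomial.natDegree_map_le
      _ = degY q := natDegree_swapPoly q
    have hA : ∀ i : Fin (s+1+1),
        ((swapPoly (u i * W^(s+1-(i:ℕ)) * bs^2 * ct)).map φm).natDegree ≤ Λ := by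
      intro i
      refine (hψdeg _).trans ?_
      have h1 := degY_mul_le (u i * W^(s+1-(i:ℕ)) * bs^2) ct
      have h2 := degY_mul_le (u i * W^(s+1-(i:ℕ))) (bs^2)
      have h3 := degY_mul_le (u i) (W^(s+1-(i:ℕ)))
      have h4 := degY_pow_le W (s+1-(i:ℕ))
      have h5 := degY_pow_le bs 2
      have h6 := hud (i : ℕ)
      have h7 : (s+1-(i:ℕ)) * degY W ≤ (s+1-(i:ℕ)) * d' := Nat.mul_le_mul_left _ hWd
      have h8 : (i:ℕ) * d' + (s+1-(i:ℕ)) * d' = (s+1) * d' := by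
        rw [← Nat.add_mul]
        congr 1
        have := i.isLt
        omega
      omega
    have hBne : (swapPoly (b*bs*ct)).map φm ≠ 0 := by
      intro h0
      apply mul_ne_zero (mul_ne_zero hb hbs0) hct0
      have h1 : swapPoly (b*bs*ct) = 0 := Polynomial.map_injective φm hφinj
        (by rw [h0, Polynomial.map_zero])
      exact swapPoly_injective (by rw [h1, map_zero])
    have hBd : ((swapPoly (b*bs*ct)).map φm).natDegree + ν ≤ Λ + 1 := by
      have := (hψdeg _).trans hBpd
      omega
    have hCd : ((swapPoly G).map φm).natDegree + ν ≤ Λ := by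
      have := (hψdeg _).trans hGd
      omega
    have hdim : Λ + 3 ≤ (s+1+1) + (ν+1) := by
      clear * - hνdef hΛγ hsdef hφ3a hγ1
      omega
    obtain ⟨P, Z, hPne, hZd, hsys⟩ := solve_system (s+1) ν Λ
      (fun i : Fin (s+1+1) => (swapPoly (u i * W^(s+1-(i:ℕ)) * bs^2 * ct)).map φm)
      ((swapPoly (b*bs*ct)).map φm) ((swapPoly G).map φm) hA hBne hBd hCd hdim
    obtain ⟨d, hd⟩ := IsLocalization.exist_integer_multiples
      (nonZeroDivisors (Polynomial K)) Finset.univ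
      (Sum.elim P (fun j : Fin (ν+1) => Z.coeff (j:ℕ)))
    have hdne : (d : Polynomial K) ≠ 0 := nonZeroDivisors.coe_ne_zero d
    have hdint : ∀ i : Fin (s+1+1), ∃ w : Polynomial K, φm w = (d : Polynomial K) • P i := by
      intro i
      obtain ⟨w, hw⟩ := hd (Sum.inl i) (Finset.mem_univ _)
      exact ⟨w, hw⟩
    choose pKf hpKf using hdint
    have hZint : ∀ n : ℕ,
        (Polynomial.C (φm (d : Polynomial K)) * Z).coeff n ∈ Set.range ⇑φm := by
      intro n
      rw [Polynomial.coeff_C_mul]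
      by_cases hn : n ≤ ν
      · obtain ⟨w, hw⟩ := hd (Sum.inr ⟨n, by omega⟩) (Finset.mem_univ _)
        refine ⟨w, ?_⟩
        rw [hw]
        simp [Algebra.smul_def, hφmdef]
      · rw [Polynomial.coeff_eq_zero_of_natDegree_lt (by omega : Z.natDegree < n), mul_zero]
        exact ⟨0, by simp⟩
    obtain ⟨z₁, hz₁⟩ := (Polynomial.mem_lifts _).mp
      ((Polynomial.lifts_iff_coeff_lifts _).mpr hZint)
    -- the scaled system over the fraction field
    have hscaled : (∑ i : Fin (s+1+1), Polynomial.C (φm (pKf i))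
          * ((swapPoly (u i * W^(s+1-(i:ℕ)) * bs^2 * ct)).map φm))
        = Polynomial.derivative (Polynomial.C (φm (d : Polynomial K)) * Z)
            * ((swapPoly (b*bs*ct)).map φm)
          + (Polynomial.C (φm (d : Polynomial K)) * Z) * ((swapPoly G).map φm) := by
      rw [Polynomial.derivative_C_mul]
      have hstep : ∀ i : Fin (s+1+1), Polynomial.C (φm (pKf i))
          = Polynomial.C (φm (d : Polynomial K)) * Polynomial.C (P i) := by
        intro i
        rw [← map_mul]
        congr 1
        rw [hpKf i, Algebra.smul_def]
      calc (∑ i : Fin (s+1+1), Polynomial.C (φm (pKf i))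
            * ((swapPoly (u i * W^(s+1-(i:ℕ)) * bs^2 * ct)).map φm))
          = Polynomial.C (φm (d : Polynomial K)) * ∑ i : Fin (s+1+1), Polynomial.C (P i)
              * ((swapPoly (u i * W^(s+1-(i:ℕ)) * bs^2 * ct)).map φm) := by
            rw [Finset.mul_sum]
            refine Finset.sum_congr rfl fun i _ => ?_
            rw [hstep i]
            ring
      _ = _ := by rw [hsys]; ring
    -- pull back to K[x][y]
    have hpull : (∑ i : Fin (s+1+1), Polynomial.C (pKf i)
          * swapPoly (u i * W^(s+1-(i:ℕ)) * bs^2 * ct))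
        = Polynomial.derivative z₁ * swapPoly (b*bs*ct) + z₁ * swapPoly G := by
      apply Polynomial.map_injective φm hφinj
      rw [Polynomial.map_add, Polynomial.map_mul, Polynomial.map_mul]
      rw [← Polynomial.derivative_map, hz₁, Polynomial.map_sum]
      calc (∑ i : Fin (s+1+1), (Polynomial.C (pKf i)
              * swapPoly (u i * W^(s+1-(i:ℕ)) * bs^2 * ct)).map φm)
          = (∑ i : Fin (s+1+1), Polynomial.C (φm (pKf i))
              * ((swapPoly (u i * W^(s+1-(i:ℕ)) * bs^2 * ct)).map φm)) := by
            refine Finset.sum_congr rfl fun i _ => ?_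
            rw [Polynomial.map_mul, Polynomial.map_C]
      _ = _ := hscaled
    -- swap back to K[y][x]
    refine ⟨pKf, swapPoly z₁, ?_, ?_⟩
    · obtain ⟨i, hi⟩ := hPne
      refine ⟨i, fun h0 => ?_⟩
      have h2 : φm (pKf i) = 0 := by rw [h0, map_zero]
      rw [hpKf i, Algebra.smul_def] at h2
      rcases mul_eq_zero.mp h2 with hx | hx
      · exact hdne (hφinj (by rw [map_zero]; exact hx))
      · exact hi hx
    · have hderiv : swapPoly (Polynomial.derivative z₁) = DY (swapPoly z₁) := by
        rw [DY_eq_swap, swapPoly_swapPoly]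
      have hswap := congrArg swapPoly hpull
      simp only [map_sum, map_add, map_mul, swapPoly_swapPoly, swapPoly_C_eq_liftX,
        hderiv] at hswap
      exact hswap
  -- final assembly
  obtain ⟨i₀, hi₀⟩ := hpK
  refine ⟨fun i => if hi : i < s+1+1 then pK ⟨i, hi⟩ else 0, ⟨i₀, by omega, ?_⟩,
    z₂, b^(2*s+1) * bs * ct^(s+1) * c0, hv0, ?_⟩
  · simp only [dif_pos i₀.isLt]
    simpa using hi₀
  · have hW0 : W ≠ 0 := by
      rw [hWdef]
      exact mul_ne_zero (pow_ne_zero _ hb) hct0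
    have hBig0 : ι (W^(s+1) * bs^2 * ct * c0) ≠ 0 :=
      hιne (mul_ne_zero (mul_ne_zero (mul_ne_zero (pow_ne_zero _ hW0)
        (pow_ne_zero _ hbs0)) hct0) hc0)
    apply mul_right_cancel₀ hBig0
    rw [Finset.sum_mul]
    have hterm : ∀ i ∈ Finset.range (s+1+1),
        ι (liftX (if hi : i < s+1+1 then pK ⟨i, hi⟩ else 0)) * Dx^[i] h
            * ι (W^(s+1) * bs^2 * ct * c0)
        = h * ι (liftX (if hi : i < s+1+1 then pK ⟨i, hi⟩ else 0)
            * (u i * W^(s+1-i) * bs^2 * ct)) := by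
      intro i hi
      have hfac : ι (W^(s+1) * bs^2 * ct * c0) = ι (W^i * c0) * ι (W^(s+1-i) * bs^2 * ct) := by
        rw [← map_mul]
        refine congrArg ι ?_
        have hii : i + (s+1-i) = s+1 := by
          have := Finset.mem_range.mp hi
          omega
        calc W^(s+1) * bs^2 * ct * c0 = W^(i + (s+1-i)) * bs^2 * ct * c0 := by rw [hii]
        _ = (W^i * c0) * (W^(s+1-i) * bs^2 * ct) := by rw [pow_add]; ring
      have hprod : ι (liftX (if hi : i < s+1+1 then pK ⟨i, hi⟩ else 0)
            * (u i * W^(s+1-i) * bs^2 * ct))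
          = ι (liftX (if hi : i < s+1+1 then pK ⟨i, hi⟩ else 0))
            * (ι (u i) * ι (W^(s+1-i) * bs^2 * ct)) := by
        simp only [map_mul]
        ring
      linear_combination (ι (liftX (if hi : i < s+1+1 then pK ⟨i, hi⟩ else 0))
            * ι (W^(s+1-i) * bs^2 * ct)) * (lemA i)
        + (ι (liftX (if hi : i < s+1+1 then pK ⟨i, hi⟩ else 0)) * Dx^[i] h) * hfac
        - h * hprod
    rw [Finset.sum_congr rfl hterm, ← Finset.mul_sum, ← map_sum]
    have hsr : (∑ i ∈ Finset.range (s+1+1),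
          liftX (if hi : i < s+1+1 then pK ⟨i, hi⟩ else 0) * (u i * W^(s+1-i) * bs^2 * ct))
        = DY z₂ * (b*bs*ct) + z₂ * G := by
      rw [← Fin.sum_univ_eq_sum_range (fun i =>
        liftX (if hi : i < s+1+1 then pK ⟨i, hi⟩ else 0)
          * (u i * W^(s+1-i) * bs^2 * ct)) (s+1+1)]
      rw [← hstar]
      refine Finset.sum_congr rfl fun i _ => ?_
      rw [dif_pos i.isLt, Fin.eta]
    rw [hsr]
    have hcert := lemB z₂
    have hbig2 : ι ((b^(2*s+1) * bs * ct^(s+1) * c0) * (b*bs*ct))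
        = ι (W^(s+1) * bs^2 * ct * c0) := congrArg ι (by rw [hWdef]; ring)
    rw [← hbig2, hcert]

end Main
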